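/- arXiv:1506.02824 — 2 statements merged into one kernel-verified Lean document; each statement's English description precedes it below -/
import Mathlib

section
/- There exist a finite set U, a block size S, and an objective function f on partitions of U such that the minimum of f over threshold blockings of size S is strictly less than the minimum over fixed-sized blockings of size S. Concretely, for U with six units having binary covariate values x = (1,1,1,0,0,0), S = 2, and f(B) the block-size-weighted average within-block Euclidean distance f(B) = Σ_{b∈B} (n_b/n) · (1/n_b²) Σ_{i,j∈b} |x_i − x_j|, the optimal threshold blocking {{1,1,1},{0,0,0}} achieves f = 0 while every fixed-sized blocking of size 2 has f ≥ 1/6. -/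
/-- In the six-unit example with binary covariates `x = (1,1,1,0,0,0)` and block size
requirement `S = 2`, using the block-size-weighted average within-block Euclidean
distance as objective, the threshold blocking `{{1,1,1},{0,0,0}}` achieves the value `0`
while every fixed-sized blocking of size 2 has objective at least `1/6`.  In particular
the minimum over threshold blockings is strictly smaller than over fixed-sized ones. -/
theorem threshold_strictly_better_example :
    let x : Fin 6 → ℝ := fun i => if (i : ℕ) < 3 then 1 else 0
    let f : Finpartition (Finset.univ : Finset (Fin 6)) → ℝ := fun P =>
      ∑ b ∈ P.parts, ((b.card : ℝ) / 6) * ((1 : ℝ) / (b.card : ℝ) ^ 2) *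
        ∑ i ∈ b, ∑ j ∈ b, |x i - x j|
    ∃ P : Finpartition (Finset.univ : Finset (Fin 6)),
      P.parts = {({0, 1, 2} : Finset (Fin 6)), ({3, 4, 5} : Finset (Fin 6))} ∧
      (∀ b ∈ P.parts, 2 ≤ b.card) ∧
      f P = 0 ∧
      ∀ Q : Finpartition (Finset.univ : Finset (Fin 6)),
        (∀ b ∈ Q.parts, b.card = 2) → 1 / 6 ≤ f Q := by
  intro x f
  have hAB : ({0, 1, 2} : Finset (Fin 6)) ≠ ({3, 4, 5} : Finset (Fin 6)) := by decide
  have hdisj : Disjoint ({0, 1, 2} : Finset (Fin 6)) ({3, 4, 5} : Finset (Fin 6)) := by decide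
  have hzero : ∀ (C : Finset (Fin 6)) (v : ℝ), (∀ i ∈ C, x i = v) →
      (∑ i ∈ C, ∑ j ∈ C, |x i - x j|) = 0 := by
    intro C v h
    refine Finset.sum_eq_zero fun i hi => Finset.sum_eq_zero fun j hj => ?_
    rw [h i hi, h j hj, sub_self, abs_zero]
  refine ⟨⟨{({0, 1, 2} : Finset (Fin 6)), ({3, 4, 5} : Finset (Fin 6))},
      (Finset.supIndep_pair hAB).mpr hdisj, by decide, by decide⟩, rfl, ?_, ?_, ?_⟩
  · intro b hb
    simp only [Finset.mem_insert, Finset.mem_singleton] at hb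
    rcases hb with rfl | rfl <;> decide
  · -- f P = 0
    simp only [f]
    rw [Finset.sum_pair hAB,
      hzero {0,1,2} 1 (by intro i hi; fin_cases hi <;> simp [x] <;> decide),
      hzero {3,4,5} 0 (by intro i hi; fin_cases hi <;> simp [x] <;> decide)]
    ring
  · intro Q hQ
    have key : ∑ b ∈ Q.parts, (b.filter (fun i : Fin 6 => (i : ℕ) < 3)).card = 3 := by
      have h1 : (Q.parts.biUnion fun b => b.filter (fun i : Fin 6 => (i : ℕ) < 3)) = Finset.univ.filter (fun i : Fin 6 => (i : ℕ) < 3) := by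
        rw [← Finset.filter_biUnion]
        congr 1
        exact Q.biUnion_parts
      have h2 : (Q.parts.biUnion fun b => b.filter (fun i : Fin 6 => (i : ℕ) < 3)).card =
          ∑ b ∈ Q.parts, (b.filter (fun i : Fin 6 => (i : ℕ) < 3)).card := by
        refine Finset.card_biUnion fun a ha b hb hne => ?_
        exact Finset.disjoint_filter_filter (Q.supIndep.pairwiseDisjoint ha hb hne)
      rw [← h2, h1]
      decide
    have hodd : ∃ b ∈ Q.parts, (b.filter (fun i : Fin 6 => (i : ℕ) < 3)).card = 1 := by
      by_contra hcon
      push_neg at hcon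
      have heven : (2 : ℕ) ∣ ∑ b ∈ Q.parts, (b.filter (fun i : Fin 6 => (i : ℕ) < 3)).card := by
        refine Finset.dvd_sum fun b hb => ?_
        have hle : (b.filter (fun i : Fin 6 => (i : ℕ) < 3)).card ≤ 2 := by
          calc (b.filter (fun i : Fin 6 => (i : ℕ) < 3)).card ≤ b.card := Finset.card_filter_le _ _
            _ = 2 := hQ b hb
        have hne := hcon b hb
        omega
      rw [key] at heven
      omega
    obtain ⟨b, hb, hb1⟩ := hodd
    obtain ⟨i, j, hij, hbij⟩ := Finset.card_eq_two.mp (hQ b hb)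
    have hinotj : i ∉ ({j} : Finset (Fin 6)) := by simp [hij]
    have habs : |x i - x j| = 1 := by
      by_cases hi : (i : ℕ) < 3 <;> by_cases hj : (j : ℕ) < 3
      · exfalso
        rw [hbij, Finset.filter_insert, Finset.filter_singleton] at hb1
        rw [if_pos hi, if_pos hj, Finset.card_insert_of_notMem hinotj,
          Finset.card_singleton] at hb1
        omega
      · simp only [x]; rw [if_pos hi, if_neg hj]; norm_num
      · simp only [x]; rw [if_neg hi, if_pos hj]; norm_num
      · exfalso
        rw [hbij, Finset.filter_insert, Finset.filter_singleton] at hb1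
        rw [if_neg hi, if_neg hj, Finset.card_empty] at hb1
        omega
    have hsum : (∑ a ∈ b, ∑ c ∈ b, |x a - x c|) = 2 := by
      rw [hbij, Finset.sum_pair hij, Finset.sum_pair hij, Finset.sum_pair hij,
        sub_self, abs_zero, sub_self, abs_zero, abs_sub_comm (x j), habs]
      ring
    have hterm : ((b.card : ℝ) / 6) * ((1 : ℝ) / (b.card : ℝ) ^ 2) *
        (∑ a ∈ b, ∑ c ∈ b, |x a - x c|) = 1 / 6 := by
      rw [hQ b hb, hsum]; norm_num
    simp only [f]
    calc (1 : ℝ) / 6 = _ := hterm.symm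
      _ ≤ _ := by
        refine Finset.single_le_sum
          (f := fun c => ((c.card : ℝ) / 6) * ((1 : ℝ) / (c.card : ℝ) ^ 2) *
            ∑ a ∈ c, ∑ d ∈ c, |x a - x d|) (fun c _ => ?_) hb
        have h1 : (0 : ℝ) ≤ (c.card : ℝ) / 6 := by positivity
        have h2 : (0 : ℝ) ≤ (1 : ℝ) / (c.card : ℝ) ^ 2 := by positivity
        have h3 : (0 : ℝ) ≤ ∑ a ∈ c, ∑ d ∈ c, |x a - x d| :=
          Finset.sum_nonneg fun a _ => Finset.sum_nonneg fun d _ => abs_nonneg _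
        exact mul_nonneg (mul_nonneg h1 h2) h3
end

section
/- Under balanced block randomization within a block b of size m ≥ 2 (T treated with T = ⌊m/2⌋ or ⌈m/2⌉ each w.p. 1/2, and given T a uniform subset of size T is treated), for distinct units i ≠ j in b: E[T_iT_j/T²] = 1/(m(m−1)) − 2/((m−1)(m² − o)) and E[T_i(1−T_j)/(T(m−T))] = 1/(m(m−1)), so their difference equals −2/((m−1)(m² − o)), where o = m mod 2. -/
open Finset

/-- Counting subsets of `A` of size `k` containing a fixed subset `t`. -/
lemma card_filter_superset {α : Type*} [DecidableEq α] (A t : Finset α) (ht : t ⊆ A)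
    {k : ℕ} (htk : t.card ≤ k) :
    ((A.powersetCard k).filter (fun s => t ⊆ s)).card = (A.card - t.card).choose (k - t.card) := by
  rw [← Finset.card_sdiff_of_subset ht, ← Finset.card_powersetCard]
  apply Finset.card_bij (fun s _ => s \ t)
  · intro s hs
    simp only [mem_filter, mem_powersetCard] at hs
    rw [mem_powersetCard]
    exact ⟨sdiff_subset_sdiff hs.1.1 le_rfl, by rw [card_sdiff_of_subset hs.2, hs.1.2]⟩
  · intro s₁ hs₁ s₂ hs₂ h
    simp only [mem_filter, mem_powersetCard] at hs₁ hs₂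
    have e1 : s₁ = s₁ \ t ∪ t := by rw [sdiff_union_of_subset hs₁.2]
    have e2 : s₂ = s₂ \ t ∪ t := by rw [sdiff_union_of_subset hs₂.2]
    rw [e1, e2, h]
  · intro u hu
    rw [mem_powersetCard] at hu
    have hdisj : Disjoint u t := disjoint_of_subset_left hu.1 sdiff_disjoint
    refine ⟨u ∪ t, ?_, ?_⟩
    · simp only [mem_filter, mem_powersetCard]
      refine ⟨⟨union_subset (hu.1.trans sdiff_subset) ht, ?_⟩, subset_union_right⟩
      rw [card_union_of_disjoint hdisj, hu.2]
      omega
    · rw [union_sdiff_right, sdiff_eq_self_of_disjoint hdisj]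

/-- The count of size-`k` subsets of `Fin m` containing both `i` and `j`. -/
lemma card_pair_mem (m k : ℕ) (i j : Fin m) (hij : i ≠ j) (hk : 2 ≤ k) :
    (((univ : Finset (Fin m)).powersetCard k).filter (fun s => i ∈ s ∧ j ∈ s)).card
      = (m - 2).choose (k - 2) := by
  have hc : ({i, j} : Finset (Fin m)).card = 2 := by
    rw [card_insert_of_notMem (by simp [hij]), card_singleton]
  have h : (((univ : Finset (Fin m)).powersetCard k).filter (fun s => i ∈ s ∧ j ∈ s))
      = (((univ : Finset (Fin m)).powersetCard k).filter
          (fun s => ({i, j} : Finset (Fin m)) ⊆ s)) := by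
    apply filter_congr
    intro s _
    simp [insert_subset_iff]
  rw [h, card_filter_superset _ _ (subset_univ _) (by rw [hc]; exact hk), hc, card_univ,
    Fintype.card_fin]

/-- The count of size-`k` subsets of `Fin m` containing `i` but not `j`. -/
lemma card_mem_not_mem (m k : ℕ) (i j : Fin m) (hij : i ≠ j) (hk : 1 ≤ k) (hm : 2 ≤ m) :
    (((univ : Finset (Fin m)).powersetCard k).filter (fun s => i ∈ s ∧ j ∉ s)).card
      = (m - 2).choose (k - 1) := by
  have h : (((univ : Finset (Fin m)).powersetCard k).filter (fun s => i ∈ s ∧ j ∉ s))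
      = ((((univ : Finset (Fin m)).erase j).powersetCard k).filter
          (fun s => ({i} : Finset (Fin m)) ⊆ s)) := by
    ext s
    simp only [mem_filter, mem_powersetCard, subset_univ, true_and, singleton_subset_iff,
      subset_erase]
    tauto
  rw [h, card_filter_superset _ _ (by simp [hij]) (by simpa using hk), card_singleton,
    card_erase_of_mem (mem_univ j), card_univ, Fintype.card_fin]
  have e : m - 1 - 1 = m - 2 := by omega
  rw [e]

/-- Value of the first type of sum. -/
lemma sum_pair (m k : ℕ) (hm : 2 ≤ m) (i j : Fin m) (hij : i ≠ j) (hk1 : 1 ≤ k)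
    (hk2 : k + 1 ≤ m) :
    ((((univ : Finset (Fin m)).powersetCard k).card : ℝ)⁻¹ *
      (∑ s ∈ (univ : Finset (Fin m)).powersetCard k,
        (if i ∈ s ∧ j ∈ s then (1 : ℝ) else 0) / (s.card : ℝ) ^ 2))
      = ((k : ℝ) - 1) / ((k : ℝ) * (m : ℝ) * ((m : ℝ) - 1)) := by
  have hsum : (∑ s ∈ (univ : Finset (Fin m)).powersetCard k,
      (if i ∈ s ∧ j ∈ s then (1 : ℝ) else 0) / (s.card : ℝ) ^ 2)
      = ((((univ : Finset (Fin m)).powersetCard k).filter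
          (fun s => i ∈ s ∧ j ∈ s)).card : ℝ) / (k : ℝ) ^ 2 := by
    calc (∑ s ∈ (univ : Finset (Fin m)).powersetCard k,
        (if i ∈ s ∧ j ∈ s then (1 : ℝ) else 0) / (s.card : ℝ) ^ 2)
        = ∑ s ∈ (univ : Finset (Fin m)).powersetCard k,
            (if i ∈ s ∧ j ∈ s then (1 : ℝ) else 0) / (k : ℝ) ^ 2 := by
          apply Finset.sum_congr rfl
          intro s hs
          rw [(mem_powersetCard.mp hs).2]
      _ = (∑ s ∈ (univ : Finset (Fin m)).powersetCard k,
            (if i ∈ s ∧ j ∈ s then (1 : ℝ) else 0)) / (k : ℝ) ^ 2 := by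
          rw [Finset.sum_div]
      _ = _ := by rw [Finset.sum_boole]
  rw [hsum, Finset.card_powersetCard, card_univ, Fintype.card_fin]
  rcases Nat.lt_or_ge k 2 with hk | hk
  · interval_cases k
    have : (((univ : Finset (Fin m)).powersetCard 1).filter
        (fun s => i ∈ s ∧ j ∈ s)).card = 0 := by
      rw [Finset.card_eq_zero, Finset.filter_eq_empty_iff]
      intro s hs
      rw [mem_powersetCard] at hs
      rintro ⟨hi, hj⟩
      have := Finset.card_le_card (Finset.insert_subset hi (Finset.singleton_subset_iff.mpr hj))
      rw [hs.2, card_insert_of_notMem (by simp [hij]), card_singleton] at this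
      omega
    simp [this]
  · rw [card_pair_mem m k i j hij hk]
    obtain ⟨k', rfl⟩ : ∃ k', k = k' + 2 := ⟨k - 2, by omega⟩
    obtain ⟨r, rfl⟩ : ∃ r, m = k' + r + 3 := ⟨m - (k' + 3), by omega⟩
    have h1 := Nat.add_one_mul_choose_eq (k' + r + 1) k'
    have h2 := Nat.add_one_mul_choose_eq (k' + r + 2) (k' + 1)
    have e1 : k' + r + 3 - 2 = k' + r + 1 := by omega
    rw [e1]
    have hC : (0:ℝ) < ((k' + r + 3).choose (k' + 2) : ℝ) := by
      exact_mod_cast Nat.choose_pos (by omega)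
    have h1' : ((k' : ℝ) + r + 2) * ((k' + r + 1).choose k' : ℝ)
        = ((k' + r + 2).choose (k' + 1) : ℝ) * ((k' : ℝ) + 1) := by exact_mod_cast h1
    have h2' : ((k' : ℝ) + r + 3) * ((k' + r + 2).choose (k' + 1) : ℝ)
        = ((k' + r + 3).choose (k' + 2) : ℝ) * ((k' : ℝ) + 2) := by exact_mod_cast h2
    have key : ((k' + r + 3).choose (k' + 2) : ℝ) * (((k' : ℝ) + 2) * ((k' : ℝ) + 1))
        = ((k' + r + 1).choose k' : ℝ) * (((k' : ℝ) + r + 3) * ((k' : ℝ) + r + 2)) := by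
      linear_combination (-((k' : ℝ) + r + 3)) * h1' - ((k' : ℝ) + 1) * h2'
    have hCne : ((k' + r + 3).choose (k' + 2) : ℝ) ≠ 0 := ne_of_gt hC
    have hk0 : (0:ℝ) ≤ (k' : ℝ) := Nat.cast_nonneg k'
    have hr0 : (0:ℝ) ≤ (r : ℝ) := Nat.cast_nonneg r
    have hne1 : ((k' : ℝ) + 2) ≠ 0 := by positivity
    have hne2 : ((k' : ℝ) + (r : ℝ) + 3) ≠ 0 := by positivity
    have hne3 : ((k' : ℝ) + (r : ℝ) + 3 - 1) ≠ 0 := by nlinarith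
    push_cast
    field_simp
    linear_combination (-1 : ℝ) * key

/-- Value of the second type of sum. -/
lemma sum_single (m k : ℕ) (hm : 2 ≤ m) (i j : Fin m) (hij : i ≠ j) (hk1 : 1 ≤ k)
    (hk2 : k + 1 ≤ m) :
    ((((univ : Finset (Fin m)).powersetCard k).card : ℝ)⁻¹ *
      (∑ s ∈ (univ : Finset (Fin m)).powersetCard k,
        (if i ∈ s ∧ j ∉ s then (1 : ℝ) else 0) / ((s.card : ℝ) * ((m : ℝ) - (s.card : ℝ)))))
      = 1 / ((m : ℝ) * ((m : ℝ) - 1)) := by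
  have hsum : (∑ s ∈ (univ : Finset (Fin m)).powersetCard k,
      (if i ∈ s ∧ j ∉ s then (1 : ℝ) else 0) / ((s.card : ℝ) * ((m : ℝ) - (s.card : ℝ))))
      = ((((univ : Finset (Fin m)).powersetCard k).filter
          (fun s => i ∈ s ∧ j ∉ s)).card : ℝ) / ((k : ℝ) * ((m : ℝ) - (k : ℝ))) := by
    calc (∑ s ∈ (univ : Finset (Fin m)).powersetCard k,
        (if i ∈ s ∧ j ∉ s then (1 : ℝ) else 0) / ((s.card : ℝ) * ((m : ℝ) - (s.card : ℝ))))
        = ∑ s ∈ (univ : Finset (Fin m)).powersetCard k,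
            (if i ∈ s ∧ j ∉ s then (1 : ℝ) else 0) / ((k : ℝ) * ((m : ℝ) - (k : ℝ))) := by
          apply Finset.sum_congr rfl
          intro s hs
          rw [(mem_powersetCard.mp hs).2]
      _ = (∑ s ∈ (univ : Finset (Fin m)).powersetCard k,
            (if i ∈ s ∧ j ∉ s then (1 : ℝ) else 0)) / ((k : ℝ) * ((m : ℝ) - (k : ℝ))) := by
          rw [Finset.sum_div]
      _ = _ := by rw [Finset.sum_boole]
  rw [hsum, Finset.card_powersetCard, card_univ, Fintype.card_fin,
    card_mem_not_mem m k i j hij hk1 hm]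
  obtain ⟨k', rfl⟩ : ∃ k', k = k' + 1 := ⟨k - 1, by omega⟩
  obtain ⟨r, rfl⟩ : ∃ r, m = k' + r + 2 := ⟨m - (k' + 2), by omega⟩
  have h1 := Nat.add_one_mul_choose_eq (k' + r) k'
  have h2 := Nat.choose_mul_succ_eq (k' + r + 1) (k' + 1)
  have e1 : k' + r + 2 - 2 = k' + r := by omega
  rw [e1]
  have hC : (0:ℝ) < ((k' + r + 2).choose (k' + 1) : ℝ) := by
    exact_mod_cast Nat.choose_pos (by omega)
  have h1' : ((k' : ℝ) + r + 1) * ((k' + r).choose k' : ℝ)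
      = ((k' + r + 1).choose (k' + 1) : ℝ) * ((k' : ℝ) + 1) := by exact_mod_cast h1
  have e3 : k' + r + 1 + 1 - (k' + 1) = r + 1 := by omega
  rw [e3] at h2
  have h2' : ((k' + r + 1).choose (k' + 1) : ℝ) * ((k' : ℝ) + r + 2)
      = ((k' + r + 2).choose (k' + 1) : ℝ) * ((r : ℝ) + 1) := by exact_mod_cast h2
  have key : ((k' + r + 2).choose (k' + 1) : ℝ) * (((k' : ℝ) + 1) * ((r : ℝ) + 1))
      = ((k' + r).choose k' : ℝ) * (((k' : ℝ) + r + 2) * ((k' : ℝ) + r + 1)) := by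
    linear_combination (-((k' : ℝ) + r + 2)) * h1' - ((k' : ℝ) + 1) * h2'
  have hCne : ((k' + r + 2).choose (k' + 1) : ℝ) ≠ 0 := ne_of_gt hC
  have hk0 : (0:ℝ) ≤ (k' : ℝ) := Nat.cast_nonneg k'
  have hr0 : (0:ℝ) ≤ (r : ℝ) := Nat.cast_nonneg r
  have hne1 : ((k' : ℝ) + 1) ≠ 0 := by positivity
  have hne2 : ((k' : ℝ) + (r : ℝ) + 2) ≠ 0 := by positivity
  have hne3 : ((k' : ℝ) + (r : ℝ) + 2 - 1) ≠ 0 := by nlinarith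
  have hne4 : ((k' : ℝ) + (r : ℝ) + 2 - ((k' : ℝ) + 1)) ≠ 0 := by
    have : ((k' : ℝ) + (r : ℝ) + 2 - ((k' : ℝ) + 1)) = (r : ℝ) + 1 := by ring
    rw [this]; positivity
  push_cast
  field_simp
  linear_combination -key

/-- Balanced block randomization in a block of size `m ≥ 2` (number of treated `T` is
`⌊m/2⌋` or `⌈m/2⌉` each with probability `1/2`; given `T`, a uniform subset of size `T`
is treated).  For distinct units `i ≠ j`:
`E[T_i T_j / T²] = 1/(m(m−1)) − 2/((m−1)(m² − o))`,
`E[T_i (1−T_j) / (T(m−T))] = 1/(m(m−1))`, and hence their difference equals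
`−2/((m−1)(m² − o))`, where `o = m mod 2`. -/
theorem expectation_pair_treatment (m : ℕ) (hm : 2 ≤ m) (i j : Fin m) (hij : i ≠ j)
    (E₁ E₂ : ℝ)
    (hE₁ : E₁ =
      (1 / 2 : ℝ) * (((Finset.univ : Finset (Fin m)).powersetCard (m / 2)).card : ℝ)⁻¹ *
          (∑ s ∈ (Finset.univ : Finset (Fin m)).powersetCard (m / 2),
            (if i ∈ s ∧ j ∈ s then (1 : ℝ) else 0) / (s.card : ℝ) ^ 2) +
        (1 / 2 : ℝ) * (((Finset.univ : Finset (Fin m)).powersetCard ((m + 1) / 2)).card : ℝ)⁻¹ *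
          (∑ s ∈ (Finset.univ : Finset (Fin m)).powersetCard ((m + 1) / 2),
            (if i ∈ s ∧ j ∈ s then (1 : ℝ) else 0) / (s.card : ℝ) ^ 2))
    (hE₂ : E₂ =
      (1 / 2 : ℝ) * (((Finset.univ : Finset (Fin m)).powersetCard (m / 2)).card : ℝ)⁻¹ *
          (∑ s ∈ (Finset.univ : Finset (Fin m)).powersetCard (m / 2),
            (if i ∈ s ∧ j ∉ s then (1 : ℝ) else 0) /
              ((s.card : ℝ) * ((m : ℝ) - (s.card : ℝ)))) +
        (1 / 2 : ℝ) * (((Finset.univ : Finset (Fin m)).powersetCard ((m + 1) / 2)).card : ℝ)⁻¹ *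
          (∑ s ∈ (Finset.univ : Finset (Fin m)).powersetCard ((m + 1) / 2),
            (if i ∈ s ∧ j ∉ s then (1 : ℝ) else 0) /
              ((s.card : ℝ) * ((m : ℝ) - (s.card : ℝ))))) :
    E₁ = 1 / ((m : ℝ) * ((m : ℝ) - 1)) -
        2 / (((m : ℝ) - 1) * ((m : ℝ) ^ 2 - ((m % 2 : ℕ) : ℝ))) ∧
      E₂ = 1 / ((m : ℝ) * ((m : ℝ) - 1)) ∧
      E₁ - E₂ = -(2 / (((m : ℝ) - 1) * ((m : ℝ) ^ 2 - ((m % 2 : ℕ) : ℝ)))) := by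
  have hk₁1 : 1 ≤ m / 2 := by omega
  have hk₁2 : m / 2 + 1 ≤ m := by omega
  have hk₂1 : 1 ≤ (m + 1) / 2 := by omega
  have hk₂2 : (m + 1) / 2 + 1 ≤ m := by omega
  rw [mul_assoc, mul_assoc, sum_pair m (m / 2) hm i j hij hk₁1 hk₁2,
    sum_pair m ((m + 1) / 2) hm i j hij hk₂1 hk₂2] at hE₁
  rw [mul_assoc, mul_assoc, sum_single m (m / 2) hm i j hij hk₁1 hk₁2,
    sum_single m ((m + 1) / 2) hm i j hij hk₂1 hk₂2] at hE₂
  have hE₂' : E₂ = 1 / ((m : ℝ) * ((m : ℝ) - 1)) := by rw [hE₂]; ring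
  have hsumk : ((m / 2 : ℕ) : ℝ) + (((m + 1) / 2 : ℕ) : ℝ) = (m : ℝ) := by
    exact_mod_cast (by omega : m / 2 + (m + 1) / 2 = m)
  have hprod : (m : ℝ) ^ 2 - ((m % 2 : ℕ) : ℝ)
      = 4 * ((m / 2 : ℕ) : ℝ) * (((m + 1) / 2 : ℕ) : ℝ) := by
    have h : 4 * (m / 2) * ((m + 1) / 2) + m % 2 = m ^ 2 := by
      rcases Nat.even_or_odd m with ⟨q, hq⟩ | ⟨q, hq⟩
      · subst hq
        have h1 : (q + q) / 2 = q := by omega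
        have h2 : (q + q + 1) / 2 = q := by omega
        have h3 : (q + q) % 2 = 0 := by omega
        rw [h1, h2, h3]; ring
      · subst hq
        have h1 : (2 * q + 1) / 2 = q := by omega
        have h2 : (2 * q + 1 + 1) / 2 = q + 1 := by omega
        have h3 : (2 * q + 1) % 2 = 1 := by omega
        rw [h1, h2, h3]; ring
    have := congrArg (fun n : ℕ => (n : ℝ)) h
    push_cast at this
    linarith
  have hk₁pos : (0:ℝ) < ((m / 2 : ℕ) : ℝ) := by exact_mod_cast hk₁1
  have hk₂pos : (0:ℝ) < (((m + 1) / 2 : ℕ) : ℝ) := by exact_mod_cast hk₂1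
  have hm1pos : (0:ℝ) < (m : ℝ) - 1 := by
    have : (1:ℝ) < (m : ℝ) := by exact_mod_cast (by omega : 1 < m)
    linarith
  have hE₁' : E₁ = 1 / ((m : ℝ) * ((m : ℝ) - 1)) -
      2 / (((m : ℝ) - 1) * ((m : ℝ) ^ 2 - ((m % 2 : ℕ) : ℝ))) := by
    rw [hE₁, hprod, ← hsumk]
    have ha : ((m / 2 : ℕ) : ℝ) ≠ 0 := ne_of_gt hk₁pos
    have hb : (((m + 1) / 2 : ℕ) : ℝ) ≠ 0 := ne_of_gt hk₂pos
    have hab1 : ((m / 2 : ℕ) : ℝ) + (((m + 1) / 2 : ℕ) : ℝ) - 1 ≠ 0 := by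
      rw [hsumk]; exact ne_of_gt hm1pos
    have hab : ((m / 2 : ℕ) : ℝ) + (((m + 1) / 2 : ℕ) : ℝ) ≠ 0 := by
      rw [hsumk]; positivity
    field_simp
    ring
  exact ⟨hE₁', hE₂', by rw [hE₁', hE₂']; ring⟩
end
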